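/- The region D = {(s, i1, i2) ∈ ℝ³ : s + i1 + i2 = 1, s ≥ 0, i1 ≥ 0, i2 ≥ 0} is positively invariant for the proportions system: every differentiable function x : ℝ → ℝ³ satisfying x'(t) equal to the right-hand side of the proportions system at x(t) for all t ≥ 0, with x(0) ∈ D, satisfies x(t) ∈ D for all t ≥ 0. -/

import Mathlib

open Filter Topology Matrix

/-- Right-hand side of the proportions system on `ℝ × ℝ × ℝ`
(coordinates `(s, i1, i2)`). -/
noncomputable def propSys (b1 b2 ε l1 l2 γ1 γ2 p q : ℝ) (x : ℝ × ℝ × ℝ) : ℝ × ℝ × ℝ :=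
  (b1*(1 - x.1) + b2*x.1*(1 - x.1) + γ1*x.2.1 + γ2*x.2.2
      + (ε - l1)*x.2.1*x.1 + (ε - l2)*x.2.2*x.1,
   p*x.1*(l1*x.2.1 + l2*x.2.2) + ε*x.2.1*(x.2.1 + x.2.2)
      - (b1 + ε + γ1)*x.2.1 - b2*x.1*x.2.1,
   q*x.1*(l1*x.2.1 + l2*x.2.2) + ε*x.2.2*(x.2.1 + x.2.2)
      - (b1 + ε + γ2)*x.2.2 - b2*x.1*x.2.2)


lemma hasDerivAt_minsq (y : ℝ) : HasDerivAt (fun z : ℝ => (min z 0)^2) (2 * min y 0) y := by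
  rcases lt_trichotomy y 0 with h|h|h
  · have he : (fun z : ℝ => (min z 0)^2) =ᶠ[𝓝 y] fun z => z^2 := by
      filter_upwards [Iio_mem_nhds h] with z hz
      rw [min_eq_left (le_of_lt hz)]
    have h2 : HasDerivAt (fun z : ℝ => z^2) (2*y) y := by
      simpa using hasDerivAt_pow 2 y
    rw [min_eq_left h.le]
    exact h2.congr_of_eventuallyEq he
  · subst h
    rw [min_self, mul_zero]
    rw [hasDerivAt_iff_tendsto_slope]
    refine squeeze_zero_norm (a := fun z : ℝ => |z|) ?_ ?_
    · intro z
      rcases eq_or_ne z 0 with rfl|hz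
      · simp [slope]
      · have h1 : slope (fun z : ℝ => (min z 0)^2) 0 z = (min z 0)^2 / z := by
          simp [slope_def_field]
        rw [h1, Real.norm_eq_abs, abs_div, div_le_iff₀ (abs_pos.2 hz)]
        have h2 : |min z 0| ≤ |z| := by
          rcases le_total z 0 with h3|h3
          · rw [min_eq_left h3]
          · rw [min_eq_right h3]; simp [abs_nonneg]
        calc |(min z 0)^2| = |min z 0|^2 := by rw [abs_pow]
          _ ≤ |z|^2 := by apply pow_le_pow_left₀ (abs_nonneg _) h2
          _ = |z| * |z| := by ring
    · have : Tendsto (fun z : ℝ => |z|) (𝓝 0) (𝓝 0) := by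
        simpa using continuous_abs.tendsto (0:ℝ)
      exact this.mono_left nhdsWithin_le_nhds
  · have he : (fun z : ℝ => (min z 0)^2) =ᶠ[𝓝 y] fun _ => (0:ℝ) := by
      filter_upwards [Ioi_mem_nhds h] with z hz
      rw [min_eq_right (le_of_lt hz), zero_pow two_ne_zero]
    rw [min_eq_right h.le, mul_zero]
    exact (hasDerivAt_const y 0).congr_of_eventuallyEq he


set_option maxHeartbeats 1000000 in
lemma sumIneq (b1 b2 ε l1 l2 γ1 γ2 p q M s i1 i2 : ℝ)
    (hb1 : 0 < b1) (hε : 0 < ε) (hpq : p + q = 1)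
    (hb2 : 0 ≤ b2) (hM : 0 ≤ M) (hsl : -M ≤ s) (hi1l : -M ≤ i1) (hi2l : -M ≤ i2)
    (hsu : s ≤ M) (hi1u : i1 ≤ M) (hi2u : i2 ≤ M) :
    2*(s+i1+i2-1)*((b1*(1 - s) + b2*s*(1 - s) + γ1*i1 + γ2*i2 + (ε - l1)*i1*s + (ε - l2)*i2*s)
        + (p*s*(l1*i1 + l2*i2) + ε*i1*(i1 + i2) - (b1 + ε + γ1)*i1 - b2*s*i1)
        + (q*s*(l1*i1 + l2*i2) + ε*i2*(i1 + i2) - (b1 + ε + γ2)*i2 - b2*s*i2))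
      ≤ (2*b1 + 2*b2*M + 4*ε*M)*(s+i1+i2-1)^2 := by
  have hq' : q = 1 - p := by linarith
  subst hq'
  have hid : ((b1*(1 - s) + b2*s*(1 - s) + γ1*i1 + γ2*i2 + (ε - l1)*i1*s + (ε - l2)*i2*s)
        + (p*s*(l1*i1 + l2*i2) + ε*i1*(i1 + i2) - (b1 + ε + γ1)*i1 - b2*s*i1)
        + ((1-p)*s*(l1*i1 + l2*i2) + ε*i2*(i1 + i2) - (b1 + ε + γ2)*i2 - b2*s*i2))
      = (1-(s+i1+i2))*(b1 + b2*s - ε*(i1+i2)) := by ring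
  rw [hid]
  have h1 : 0 ≤ (2*b1 + 2*b2*M + 4*ε*M) + 2*(b1 + b2*s - ε*(i1+i2)) := by
    nlinarith [mul_nonneg hb2 (by linarith : (0:ℝ) ≤ M + s),
      mul_nonneg hε.le (by linarith : (0:ℝ) ≤ 2*M - (i1 + i2))]
  nlinarith [mul_nonneg h1 (sq_nonneg (s+i1+i2-1))]

lemma termA1 (b1 s u : ℝ) (hb1 : 0 ≤ b1) (hu0 : u ≤ 0) (hus : s*u = u^2) :
    2*u*(b1*(1-s)) ≤ 0 := by
  have e : 2*u*(b1*(1-s)) = 2*b1*u - 2*b1*u^2 := by rw [← hus]; ring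
  rw [e]
  nlinarith [mul_nonneg hb1 (sq_nonneg u), mul_nonpos_of_nonneg_of_nonpos hb1 hu0]

lemma termA2 (b2 M s u : ℝ) (hb2 : 0 ≤ b2) (hus : s*u = u^2) (hMs : 0 ≤ M + s) :
    2*u*(b2*s*(1-s)) ≤ 2*b2*(1+M)*u^2 := by
  have e : 2*u*(b2*s*(1-s)) = 2*b2*u^2*(1-s) := by rw [← hus]; ring
  rw [e]
  nlinarith [mul_nonneg (mul_nonneg hb2 (sq_nonneg u)) hMs]

lemma termA3 (γ i u v : ℝ) (hγ : 0 ≤ γ) (hu0 : u ≤ 0) (hipl : 0 ≤ i - v) :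
    2*u*(γ*i) ≤ γ*(u^2+v^2) := by
  have t1 : u*(i - v) ≤ 0 := mul_nonpos_of_nonpos_of_nonneg hu0 hipl
  have t2 : γ*(u*(i-v)) ≤ 0 := mul_nonpos_of_nonneg_of_nonpos hγ t1
  nlinarith [t2, mul_nonneg hγ (sq_nonneg (u-v))]

lemma termA5 (c e M s i u : ℝ) (habs : c*i ≤ e*M) (hus : s*u = u^2) :
    2*u*(c*i*s) ≤ 2*e*M*u^2 := by
  have he : 2*u*(c*i*s) = 2*(c*i)*u^2 := by rw [← hus]; ring
  rw [he]
  nlinarith [mul_nonneg (sub_nonneg.2 habs) (sq_nonneg u)]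

lemma termB1 (l p M s i v : ℝ) (hl : 0 ≤ l) (hps : p*s ≤ M) (hiv : i*v = v^2) :
    2*v*(p*s*(l*i)) ≤ 2*l*M*v^2 := by
  have e : 2*v*(p*s*(l*i)) = 2*l*(p*s)*v^2 := by rw [← hiv]; ring
  rw [e]
  nlinarith [mul_nonneg (mul_nonneg hl (sub_nonneg.2 hps)) (sq_nonneg v)]

lemma termB2 (l p M s i2 u v w : ℝ) (hl : 0 < l) (hp : 0 < p) (hp1 : p ≤ 1) (hM : 0 ≤ M)
    (hu0 : u ≤ 0) (hv0 : v ≤ 0) (hw0 : w ≤ 0)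
    (hspl : 0 ≤ s - u) (hspu : s - u ≤ M) (hip2l : 0 ≤ i2 - w) (hip2u : i2 - w ≤ M) :
    2*v*(p*s*(l*i2)) ≤ l*M*(u^2+2*v^2+w^2) := by
  have hvu : 0 ≤ v*u := mul_nonneg_of_nonpos_of_nonpos hv0 hu0
  have hvw : 0 ≤ v*w := mul_nonneg_of_nonpos_of_nonpos hv0 hw0
  have t1 : v*u*w ≤ 0 := mul_nonpos_of_nonneg_of_nonpos hvu hw0
  have t2 : v*u*(i2-w) ≤ v*u*M := mul_le_mul_of_nonneg_left hip2u hvu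
  have t3 : v*w*(s-u) ≤ v*w*M := mul_le_mul_of_nonneg_left hspu hvw
  have t4 : v*((s-u)*(i2-w)) ≤ 0 :=
    mul_nonpos_of_nonpos_of_nonneg hv0 (mul_nonneg hspl hip2l)
  have h1 : v*s*i2 ≤ M*(v*u + v*w) := by nlinarith [t1, t2, t3, t4]
  have f1 : 2*p*l*(v*s*i2) ≤ 2*p*l*(M*(v*u+v*w)) :=
    mul_le_mul_of_nonneg_left h1 (by positivity)
  have f2 : 0 ≤ p*l*M*(u-v)^2 := by positivity
  have f3 : 0 ≤ p*l*M*(v-w)^2 := by positivity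
  have f4 : 0 ≤ (1-p)*(l*M*(u^2+2*v^2+w^2)) := by
    apply mul_nonneg (by linarith)
    positivity
  nlinarith [f1, f2, f3, f4]

lemma termB3 (ε M i1 i2 v : ℝ) (hε : 0 ≤ ε) (hiv : i1*v = v^2) (h2M : i1 + i2 ≤ 2*M) :
    2*v*(ε*i1*(i1+i2)) ≤ 4*ε*M*v^2 := by
  have e : 2*v*(ε*i1*(i1+i2)) = 2*ε*v^2*(i1+i2) := by rw [← hiv]; ring
  rw [e]
  nlinarith [mul_nonneg (mul_nonneg hε (sq_nonneg v)) (by linarith : (0:ℝ) ≤ 2*M - (i1+i2))]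

lemma termB4 (c i v : ℝ) (hc : 0 ≤ c) (hiv : i*v = v^2) :
    -(2*v*(c*i)) ≤ 0 := by
  have e : -(2*v*(c*i)) = -(2*c*v^2) := by rw [← hiv]; ring
  rw [e]
  nlinarith [mul_nonneg hc (sq_nonneg v)]

lemma termB5 (b2 M s i v : ℝ) (hb2 : 0 ≤ b2) (hiv : i*v = v^2) (hMs : 0 ≤ M + s) :
    -(2*v*(b2*s*i)) ≤ 2*b2*M*v^2 := by
  have e : -(2*v*(b2*s*i)) = -(2*b2*s*v^2) := by rw [← hiv]; ring
  rw [e]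
  nlinarith [mul_nonneg (mul_nonneg hb2 (sq_nonneg v)) hMs]

set_option maxHeartbeats 2000000 in
lemma keyIneq (b1 b2 ε l1 l2 γ1 γ2 p q M s i1 i2 : ℝ)
    (hb1 : 0 < b1) (hε : 0 < ε) (hl1 : 0 < l1) (hl2 : 0 < l2)
    (hγ1 : 0 < γ1) (hγ2 : 0 < γ2) (hp : 0 < p) (hq : 0 < q) (hpq : p + q = 1)
    (hb2 : 0 ≤ b2) (hM : 0 ≤ M) (hs : |s| ≤ M) (hi1 : |i1| ≤ M) (hi2 : |i2| ≤ M) :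
    2*(s+i1+i2-1)*((b1*(1 - s) + b2*s*(1 - s) + γ1*i1 + γ2*i2 + (ε - l1)*i1*s + (ε - l2)*i2*s)
        + (p*s*(l1*i1 + l2*i2) + ε*i1*(i1 + i2) - (b1 + ε + γ1)*i1 - b2*s*i1)
        + (q*s*(l1*i1 + l2*i2) + ε*i2*(i1 + i2) - (b1 + ε + γ2)*i2 - b2*s*i2))
      + 2*(min s 0)*(b1*(1 - s) + b2*s*(1 - s) + γ1*i1 + γ2*i2 + (ε - l1)*i1*s + (ε - l2)*i2*s)
      + 2*(min i1 0)*(p*s*(l1*i1 + l2*i2) + ε*i1*(i1 + i2) - (b1 + ε + γ1)*i1 - b2*s*i1)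
      + 2*(min i2 0)*(q*s*(l1*i1 + l2*i2) + ε*i2*(i1 + i2) - (b1 + ε + γ2)*i2 - b2*s*i2)
      ≤ (2*b1 + 2*b2*(1+M) + 2*b2*M + γ1 + γ2 + 2*(|ε-l1|)*M + 2*(|ε-l2|)*M + 4*ε*M + 3*l1*M + 3*l2*M)
        * ((s+i1+i2-1)^2 + (min s 0)^2 + (min i1 0)^2 + (min i2 0)^2) := by
  obtain ⟨hsl, hsu⟩ := abs_le.1 hs
  obtain ⟨hi1l, hi1u⟩ := abs_le.1 hi1
  obtain ⟨hi2l, hi2u⟩ := abs_le.1 hi2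
  set u := min s 0 with hu
  set v := min i1 0 with hv
  set w := min i2 0 with hw
  have hu0 : u ≤ 0 := min_le_right s 0
  have hv0 : v ≤ 0 := min_le_right i1 0
  have hw0 : w ≤ 0 := min_le_right i2 0
  have hus : s * u = u^2 := by
    rcases le_total s 0 with h|h
    · rw [hu, min_eq_left h]; ring
    · rw [hu, min_eq_right h]; ring
  have hiv : i1 * v = v^2 := by
    rcases le_total i1 0 with h|h
    · rw [hv, min_eq_left h]; ring
    · rw [hv, min_eq_right h]; ring
  have hiw : i2 * w = w^2 := by
    rcases le_total i2 0 with h|h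
    · rw [hw, min_eq_left h]; ring
    · rw [hw, min_eq_right h]; ring
  have hspl : 0 ≤ s - u := by simp [hu]
  have hspu : s - u ≤ M := by
    rcases le_total s 0 with h|h
    · rw [hu, min_eq_left h]; simpa using hM
    · rw [hu, min_eq_right h]; simpa using hsu
  have hip1l : 0 ≤ i1 - v := by simp [hv]
  have hip1u : i1 - v ≤ M := by
    rcases le_total i1 0 with h|h
    · rw [hv, min_eq_left h]; simpa using hM
    · rw [hv, min_eq_right h]; simpa using hi1u
  have hip2l : 0 ≤ i2 - w := by simp [hw]
  have hip2u : i2 - w ≤ M := by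
    rcases le_total i2 0 with h|h
    · rw [hw, min_eq_left h]; simpa using hM
    · rw [hw, min_eq_right h]; simpa using hi2u
  have hp1 : p ≤ 1 := by linarith
  have hq1 : q ≤ 1 := by linarith
  set e1 := |ε - l1| with he1
  set e2 := |ε - l2| with he2
  have he1n : 0 ≤ e1 := abs_nonneg _
  have he2n : 0 ≤ e2 := abs_nonneg _
  have habs1 : (ε-l1)*i1 ≤ e1*M := by
    calc (ε-l1)*i1 ≤ |(ε-l1)*i1| := le_abs_self _
      _ = e1*|i1| := by rw [he1, abs_mul]
      _ ≤ e1*M := mul_le_mul_of_nonneg_left hi1 he1n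
  have habs2 : (ε-l2)*i2 ≤ e2*M := by
    calc (ε-l2)*i2 ≤ |(ε-l2)*i2| := le_abs_self _
      _ = e2*|i2| := by rw [he2, abs_mul]
      _ ≤ e2*M := mul_le_mul_of_nonneg_left hi2 he2n
  clear_value u v w e1 e2
  clear hu hv hw he1 he2 hs hi1 hi2
  have hD := sumIneq b1 b2 ε l1 l2 γ1 γ2 p q M s i1 i2 hb1 hε hpq hb2 hM hsl hi1l hi2l hsu hi1u hi2u
  have hA1 := termA1 b1 s u hb1.le hu0 hus
  have hA2 := termA2 b2 M s u hb2 hus (by linarith)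
  have hA3 := termA3 γ1 i1 u v hγ1.le hu0 hip1l
  have hA4 := termA3 γ2 i2 u w hγ2.le hu0 hip2l
  have hA5 := termA5 (ε-l1) e1 M s i1 u habs1 hus
  have hA6 := termA5 (ε-l2) e2 M s i2 u habs2 hus
  have hB1 := termB1 l1 p M s i1 v hl1.le (by nlinarith) hiv
  have hB2 := termB2 l2 p M s i2 u v w hl2 hp hp1 hM hu0 hv0 hw0 hspl hspu hip2l hip2u
  have hB3 := termB3 ε M i1 i2 v hε.le hiv (by linarith)
  have hB4 := termB4 (b1+ε+γ1) i1 v (by linarith) hiv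
  have hB5 := termB5 b2 M s i1 v hb2 hiv (by linarith)
  have hC1 := termB1 l2 q M s i2 w hl2.le (by nlinarith) hiw
  have hC2 := termB2 l1 q M s i1 u w v hl1 hq hq1 hM hu0 hw0 hv0 hspl hspu hip1l hip1u
  have hC3 : 2*w*(ε*i2*(i1+i2)) ≤ 4*ε*M*w^2 := by
    have e : 2*w*(ε*i2*(i1+i2)) = 2*ε*w^2*(i1+i2) := by rw [← hiw]; ring
    rw [e]
    nlinarith [mul_nonneg (mul_nonneg hε.le (sq_nonneg w)) (by linarith : (0:ℝ) ≤ 2*M - (i1+i2))]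
  have hC4 := termB4 (b1+ε+γ2) i2 w (by linarith) hiw
  have hC5 := termB5 b2 M s i2 w hb2 hiw (by linarith)
  have expand : 2*u*(b1*(1 - s) + b2*s*(1 - s) + γ1*i1 + γ2*i2 + (ε - l1)*i1*s + (ε - l2)*i2*s)
      = 2*u*(b1*(1-s)) + 2*u*(b2*s*(1-s)) + 2*u*(γ1*i1) + 2*u*(γ2*i2)
        + 2*u*((ε-l1)*i1*s) + 2*u*((ε-l2)*i2*s) := by ring
  have expand2 : 2*v*(p*s*(l1*i1 + l2*i2) + ε*i1*(i1 + i2) - (b1 + ε + γ1)*i1 - b2*s*i1)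
      = 2*v*(p*s*(l1*i1)) + 2*v*(p*s*(l2*i2)) + 2*v*(ε*i1*(i1+i2))
        + (-(2*v*((b1 + ε + γ1)*i1))) + (-(2*v*(b2*s*i1))) := by ring
  have expand3 : 2*w*(q*s*(l1*i1 + l2*i2) + ε*i2*(i1 + i2) - (b1 + ε + γ2)*i2 - b2*s*i2)
      = 2*w*(q*s*(l1*i1)) + 2*w*(q*s*(l2*i2)) + 2*w*(ε*i2*(i1+i2))
        + (-(2*w*((b1 + ε + γ2)*i2))) + (-(2*w*(b2*s*i2))) := by ring
  rw [expand, expand2, expand3]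
  have q1 := sq_nonneg (s+i1+i2-1)
  have q2 := sq_nonneg u
  have q3 := sq_nonneg v
  have q4 := sq_nonneg w
  linarith [hD, hA1, hA2, hA3, hA4, hA5, hA6, hB1, hB2, hB3, hB4, hB5, hC1, hC2, hC3, hC4, hC5,
    mul_nonneg hb1.le q1, mul_nonneg hb1.le q2, mul_nonneg hb1.le q3, mul_nonneg hb1.le q4,
    mul_nonneg hb2 q1, mul_nonneg hb2 q2, mul_nonneg hb2 q3, mul_nonneg hb2 q4,
    mul_nonneg (mul_nonneg hb2 hM) q1, mul_nonneg (mul_nonneg hb2 hM) q2,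
    mul_nonneg (mul_nonneg hb2 hM) q3, mul_nonneg (mul_nonneg hb2 hM) q4,
    mul_nonneg hγ1.le q1, mul_nonneg hγ1.le q2, mul_nonneg hγ1.le q3, mul_nonneg hγ1.le q4,
    mul_nonneg hγ2.le q1, mul_nonneg hγ2.le q2, mul_nonneg hγ2.le q3, mul_nonneg hγ2.le q4,
    mul_nonneg (mul_nonneg he1n hM) q1, mul_nonneg (mul_nonneg he1n hM) q2,
    mul_nonneg (mul_nonneg he1n hM) q3, mul_nonneg (mul_nonneg he1n hM) q4,
    mul_nonneg (mul_nonneg he2n hM) q1, mul_nonneg (mul_nonneg he2n hM) q2,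
    mul_nonneg (mul_nonneg he2n hM) q3, mul_nonneg (mul_nonneg he2n hM) q4,
    mul_nonneg (mul_nonneg hε.le hM) q1, mul_nonneg (mul_nonneg hε.le hM) q2,
    mul_nonneg (mul_nonneg hε.le hM) q3, mul_nonneg (mul_nonneg hε.le hM) q4,
    mul_nonneg (mul_nonneg hl1.le hM) q1, mul_nonneg (mul_nonneg hl1.le hM) q2,
    mul_nonneg (mul_nonneg hl1.le hM) q3, mul_nonneg (mul_nonneg hl1.le hM) q4,
    mul_nonneg (mul_nonneg hl2.le hM) q1, mul_nonneg (mul_nonneg hl2.le hM) q2,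
    mul_nonneg (mul_nonneg hl2.le hM) q3, mul_nonneg (mul_nonneg hl2.le hM) q4]


set_option maxHeartbeats 1000000 in
theorem stmt1 (b b1 b2 d ε l1 l2 γ1 γ2 p q : ℝ)
    (hb1 : 0 < b1) (hd : 0 < d) (hε : 0 < ε) (hl1 : 0 < l1) (hl2 : 0 < l2)
    (hγ1 : 0 < γ1) (hγ2 : 0 < γ2) (hp : 0 < p) (hq : 0 < q)
    (hb : b1 ≤ b) (hb2 : b2 = b - b1) (hpq : p + q = 1) :
    ∀ x : ℝ → ℝ × ℝ × ℝ,
      (∀ t : ℝ, 0 ≤ t → HasDerivAt x (propSys b1 b2 ε l1 l2 γ1 γ2 p q (x t)) t) →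
      ((x 0).1 + (x 0).2.1 + (x 0).2.2 = 1 ∧ 0 ≤ (x 0).1 ∧ 0 ≤ (x 0).2.1 ∧ 0 ≤ (x 0).2.2) →
      ∀ t : ℝ, 0 ≤ t →
        (x t).1 + (x t).2.1 + (x t).2.2 = 1 ∧ 0 ≤ (x t).1 ∧ 0 ≤ (x t).2.1 ∧ 0 ≤ (x t).2.2 := by
  intro x hx h0 T hT
  have hb2' : 0 ≤ b2 := by rw [hb2]; linarith
  -- continuity of x on [0, T]
  have hxc : ContinuousOn x (Set.Icc 0 T) := fun t ht =>
    ((hx t ht.1).continuousAt).continuousWithinAt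
  -- bound on [0, T]
  obtain ⟨C, hC⟩ := isCompact_Icc.exists_bound_of_continuousOn hxc
  set M := max C 0 with hMdef
  have hM : 0 ≤ M := le_max_right _ _
  have hbs : ∀ t ∈ Set.Icc (0:ℝ) T, |(x t).1| ≤ M ∧ |(x t).2.1| ≤ M ∧ |(x t).2.2| ≤ M := by
    intro t ht
    have h := hC t ht
    have h1 : ‖(x t).1‖ ≤ ‖x t‖ := norm_fst_le _
    have h2 : ‖(x t).2‖ ≤ ‖x t‖ := norm_snd_le _
    have h21 : ‖(x t).2.1‖ ≤ ‖(x t).2‖ := norm_fst_le _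
    have h22 : ‖(x t).2.2‖ ≤ ‖(x t).2‖ := norm_snd_le _
    have hCM : C ≤ M := le_max_left _ _
    simp only [Real.norm_eq_abs] at h1 h2 h21 h22
    exact ⟨by linarith, by linarith, by linarith⟩
  -- the Lyapunov-type function
  set K : ℝ := 2*b1 + 2*b2*(1+M) + 2*b2*M + γ1 + γ2 + 2*(|ε-l1|)*M + 2*(|ε-l2|)*M
      + 4*ε*M + 3*l1*M + 3*l2*M with hK
  set F : ℝ → ℝ := fun t => ((x t).1 + (x t).2.1 + (x t).2.2 - 1)^2
      + (min (x t).1 0)^2 + (min (x t).2.1 0)^2 + (min (x t).2.2 0)^2 with hF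
  set F' : ℝ → ℝ := fun t =>
      2*((x t).1 + (x t).2.1 + (x t).2.2 - 1)*((propSys b1 b2 ε l1 l2 γ1 γ2 p q (x t)).1
        + (propSys b1 b2 ε l1 l2 γ1 γ2 p q (x t)).2.1
        + (propSys b1 b2 ε l1 l2 γ1 γ2 p q (x t)).2.2)
      + 2*(min (x t).1 0)*(propSys b1 b2 ε l1 l2 γ1 γ2 p q (x t)).1
      + 2*(min (x t).2.1 0)*(propSys b1 b2 ε l1 l2 γ1 γ2 p q (x t)).2.1
      + 2*(min (x t).2.2 0)*(propSys b1 b2 ε l1 l2 γ1 γ2 p q (x t)).2.2 with hF'def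
  have hF' : ∀ t : ℝ, 0 ≤ t → HasDerivAt F (F' t) t := by
    intro t ht
    have h := hx t ht
    have h1 : HasDerivAt (fun t => (x t).1) (propSys b1 b2 ε l1 l2 γ1 γ2 p q (x t)).1 t := h.fst
    have h2 : HasDerivAt (fun t => (x t).2.1) (propSys b1 b2 ε l1 l2 γ1 γ2 p q (x t)).2.1 t :=
      h.snd.fst
    have h3 : HasDerivAt (fun t => (x t).2.2) (propSys b1 b2 ε l1 l2 γ1 γ2 p q (x t)).2.2 t :=
      h.snd.snd
    have hsum : HasDerivAt (fun t => ((x t).1 + (x t).2.1 + (x t).2.2 - 1)^2)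
        (2*((x t).1 + (x t).2.1 + (x t).2.2 - 1)^1
          *((propSys b1 b2 ε l1 l2 γ1 γ2 p q (x t)).1
            + (propSys b1 b2 ε l1 l2 γ1 γ2 p q (x t)).2.1
            + (propSys b1 b2 ε l1 l2 γ1 γ2 p q (x t)).2.2)) t := by
      have := (((h1.add h2).add h3).sub_const 1).pow 2
      simpa [Pi.pow_def] using this
    have hm1 : HasDerivAt (fun t => (min (x t).1 0)^2)
        (2 * min (x t).1 0 * (propSys b1 b2 ε l1 l2 γ1 γ2 p q (x t)).1) t :=
      by have := (hasDerivAt_minsq ((x t).1)).comp t h1; exact this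
    have hm2 : HasDerivAt (fun t => (min (x t).2.1 0)^2)
        (2 * min (x t).2.1 0 * (propSys b1 b2 ε l1 l2 γ1 γ2 p q (x t)).2.1) t :=
      by have := (hasDerivAt_minsq ((x t).2.1)).comp t h2; exact this
    have hm3 : HasDerivAt (fun t => (min (x t).2.2 0)^2)
        (2 * min (x t).2.2 0 * (propSys b1 b2 ε l1 l2 γ1 γ2 p q (x t)).2.2) t :=
      by have := (hasDerivAt_minsq ((x t).2.2)).comp t h3; exact this
    have := ((hsum.add hm1).add hm2).add hm3
    refine this.congr_deriv ?_
    simp only [hF'def]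
    ring
  have hFc : ContinuousOn F (Set.Icc 0 T) := fun t ht =>
    ((hF' t ht.1).continuousAt).continuousWithinAt
  have hbound : ∀ t ∈ Set.Ico (0:ℝ) T, F' t ≤ K * F t + 0 := by
    intro t ht
    obtain ⟨hs, hi1, hi2⟩ := hbs t ⟨ht.1, ht.2.le⟩
    have := keyIneq b1 b2 ε l1 l2 γ1 γ2 p q M (x t).1 (x t).2.1 (x t).2.2
      hb1 hε hl1 hl2 hγ1 hγ2 hp hq hpq hb2' hM hs hi1 hi2
    rw [add_zero]
    simpa only [hF'def, hF, hK, propSys] using this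
  have hgron := le_gronwallBound_of_liminf_deriv_right_le hFc
    (fun t ht r hr => ((hF' t ht.1).hasDerivWithinAt.liminf_right_slope_le hr))
    (by
      -- F 0 ≤ 0
      obtain ⟨he, hs0, hi10, hi20⟩ := h0
      simp only [hF, he, min_eq_right hs0, min_eq_right hi10, min_eq_right hi20]
      norm_num : F 0 ≤ 0)
    hbound T ⟨hT, le_refl T⟩
  rw [gronwallBound_ε0_δ0] at hgron
  have q1 := sq_nonneg ((x T).1 + (x T).2.1 + (x T).2.2 - 1)
  have q2 := sq_nonneg (min (x T).1 0)
  have q3 := sq_nonneg (min (x T).2.1 0)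
  have q4 := sq_nonneg (min (x T).2.2 0)
  have hFT : F T = ((x T).1 + (x T).2.1 + (x T).2.2 - 1)^2
      + (min (x T).1 0)^2 + (min (x T).2.1 0)^2 + (min (x T).2.2 0)^2 := rfl
  rw [hFT] at hgron
  have e1 : ((x T).1 + (x T).2.1 + (x T).2.2 - 1)^2 = 0 := by linarith
  have e2 : (min (x T).1 0)^2 = 0 := by linarith
  have e3 : (min (x T).2.1 0)^2 = 0 := by linarith
  have e4 : (min (x T).2.2 0)^2 = 0 := by linarith
  have f1 : (x T).1 + (x T).2.1 + (x T).2.2 - 1 = 0 := by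
    exact pow_eq_zero_iff two_ne_zero |>.1 e1
  have f2 : min (x T).1 0 = 0 := pow_eq_zero_iff two_ne_zero |>.1 e2
  have f3 : min (x T).2.1 0 = 0 := pow_eq_zero_iff two_ne_zero |>.1 e3
  have f4 : min (x T).2.2 0 = 0 := pow_eq_zero_iff two_ne_zero |>.1 e4
  exact ⟨by linarith, min_eq_right_iff.1 f2, min_eq_right_iff.1 f3, min_eq_right_iff.1 f4⟩
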